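/- Let y, z : ℝ → ℝ be three times continuously differentiable with κ(s) = √(y''(s)² + z''(s)²) > 0 for all s, and let α_N(s) = N(s) = (1/κ(s))·(0, y''(s), z''(s)) be the principal normal spherical representation of the Galilean curve α(s) = (s, y(s), z(s)). Then the Galilean norm of N'(s) equals |τ(s)|, where τ(s) = (y''(s)·z'''(s) − y'''(s)·z''(s))/κ(s)²; consequently the Galilean arc length of α_N from 0 to s equals ∫₀ˢ |τ(u)| du, i.e., the arc length parameter s_N of α_N satisfies ds_N/ds = |τ(s)|. -/

import Mathlib

/-- The Galilean norm of a vector `(0, a, b)` is `√(a² + b²)`. -/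
noncomputable def galNorm (v : Fin 3 → ℝ) : ℝ := Real.sqrt ((v 1) ^ 2 + (v 2) ^ 2)

/-- The Galilean norm of `N'(s)` equals `|τ(s)|`; consequently the Galilean arc
length of the principal normal spherical representation `α_N = N` satisfies
`s_N(s) = ∫₀ˢ |τ(u)| du`, i.e. `ds_N/ds = |τ(s)|`. -/
theorem galilean_normal_spherical_arclength
    (y z κ τ sN : ℝ → ℝ) (αN : ℝ → Fin 3 → ℝ)
    (hy : ContDiff ℝ 3 y) (hz : ContDiff ℝ 3 z)
    (hκ : ∀ s, κ s = Real.sqrt ((deriv (deriv y) s) ^ 2 + (deriv (deriv z) s) ^ 2))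
    (hκpos : ∀ s, 0 < κ s)
    (hτ : ∀ s, τ s =
      (deriv (deriv y) s * deriv (deriv (deriv z)) s
        - deriv (deriv (deriv y)) s * deriv (deriv z) s) / (κ s) ^ 2)
    (hαN : ∀ s, αN s = (κ s)⁻¹ • ![0, deriv (deriv y) s, deriv (deriv z) s])
    (hsN : ∀ s, sN s = ∫ u in (0:ℝ)..s, galNorm (deriv αN u)) :
    (∀ s, galNorm (deriv αN s) = |τ s|) ∧
    (∀ s, sN s = ∫ u in (0:ℝ)..s, |τ u|) ∧
    (∀ s, HasDerivAt sN (|τ s|) s) := by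
  set A := deriv (deriv y) with hA
  set B := deriv (deriv z) with hB
  have hA1 : ContDiff ℝ 1 A := by
    have := ContDiff.iterate_deriv' 1 2 (f := y) (by exact_mod_cast hy)
    simpa [Function.iterate_succ, Function.comp, hA] using this
  have hB1 : ContDiff ℝ 1 B := by
    have := ContDiff.iterate_deriv' 1 2 (f := z) (by exact_mod_cast hz)
    simpa [Function.iterate_succ, Function.comp, hB] using this
  have hAd : ∀ t, HasDerivAt A (deriv A t) t := fun t =>
    ((hA1.differentiable one_ne_zero) t).hasDerivAt
  have hBd : ∀ t, HasDerivAt B (deriv B t) t := fun t =>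
    ((hB1.differentiable one_ne_zero) t).hasDerivAt
  have hκne : ∀ s, κ s ≠ 0 := fun s => ne_of_gt (hκpos s)
  have hκsq : ∀ s, (κ s) ^ 2 = A s ^ 2 + B s ^ 2 := by
    intro s; rw [hκ s]; exact Real.sq_sqrt (by positivity)
  have hppos : ∀ s, 0 < A s ^ 2 + B s ^ 2 := fun s => by
    rw [← hκsq s]; exact pow_pos (hκpos s) 2
  have hκd : ∀ s, HasDerivAt κ ((A s * deriv A s + B s * deriv B s) / κ s) s := by
    intro s
    have h1 : HasDerivAt (fun t => A t ^ 2 + B t ^ 2)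
        (2 * A s ^ 1 * deriv A s + 2 * B s ^ 1 * deriv B s) s :=
      ((hAd s).pow 2).add ((hBd s).pow 2)
    have h2 := (Real.hasDerivAt_sqrt (ne_of_gt (hppos s))).comp s h1
    have hfun : κ = fun t => Real.sqrt (A t ^ 2 + B t ^ 2) := funext hκ
    rw [hfun]
    convert h2 using 1
    all_goals try rfl
    have h0 : Real.sqrt (A s ^ 2 + B s ^ 2) ≠ 0 := by rw [← hκ s]; exact hκne s
    field_simp
  have hαNd : ∀ s, HasDerivAt αN (![0, -B s * τ s / κ s, A s * τ s / κ s]) s := by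
    intro s
    have hfun : αN = fun t => (κ t)⁻¹ • ![0, A t, B t] := funext hαN
    rw [hfun, hasDerivAt_pi]
    intro i
    fin_cases i
    · show HasDerivAt (fun x => (κ x)⁻¹ * (0:ℝ)) 0 s
      have : (fun x => (κ x)⁻¹ * (0:ℝ)) = fun _ => (0:ℝ) := by funext x; ring
      rw [this]; exact hasDerivAt_const s 0
    · show HasDerivAt (fun t => (κ t)⁻¹ * A t) (-B s * τ s / κ s) s
      have heq : (fun t => (κ t)⁻¹ * A t) = fun t => A t / κ t := by
        funext t; rw [div_eq_inv_mul]
      rw [heq]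
      have hd := (hAd s).div (hκd s) (hκne s)
      convert hd using 1
      all_goals try rfl
      rw [hτ s]
      have h0 := hκne s
      field_simp [h0]
      linear_combination (-deriv A s) * hκsq s
    · show HasDerivAt (fun t => (κ t)⁻¹ * B t) (A s * τ s / κ s) s
      have heq : (fun t => (κ t)⁻¹ * B t) = fun t => B t / κ t := by
        funext t; rw [div_eq_inv_mul]
      rw [heq]
      have hd := (hBd s).div (hκd s) (hκne s)
      convert hd using 1
      all_goals try rfl
      rw [hτ s]
      have h0 := hκne s
      field_simp [h0]
      linear_combination (-deriv B s) * hκsq s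
  have part1 : ∀ s, galNorm (deriv αN s) = |τ s| := by
    intro s
    rw [(hαNd s).deriv]
    unfold galNorm
    have h0 := hκne s
    have hval : (![0, -B s * τ s / κ s, A s * τ s / κ s] : Fin 3 → ℝ) 1 ^ 2
        + (![0, -B s * τ s / κ s, A s * τ s / κ s] : Fin 3 → ℝ) 2 ^ 2 = τ s ^ 2 := by
      simp only [Matrix.cons_val_one, Matrix.head_cons, Matrix.cons_val_two, Matrix.tail_cons, Matrix.cons_val_zero]
      field_simp [h0]
      linear_combination (-(τ s ^ 2)) * hκsq s
    rw [hval, Real.sqrt_sq_eq_abs]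
  have hτcont : Continuous fun u => |τ u| := by
    have hfun : τ = fun s => (A s * deriv B s - deriv A s * B s) / κ s ^ 2 := funext hτ
    have hκcont : Continuous κ := by
      have hk : κ = fun t => Real.sqrt (A t ^ 2 + B t ^ 2) := funext hκ
      rw [hk]
      exact Real.continuous_sqrt.comp ((hA1.continuous.pow 2).add (hB1.continuous.pow 2))
    have : Continuous τ := by
      rw [hfun]
      exact (((hA1.continuous.mul (hB1.continuous_deriv le_rfl)).sub
        ((hA1.continuous_deriv le_rfl).mul hB1.continuous)).div (hκcont.pow 2)
        (fun s => pow_ne_zero 2 (hκne s)))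
    exact this.abs
  have hsNfun : sN = fun t => ∫ u in (0:ℝ)..t, |τ u| := by
    funext t
    rw [hsN t]
    exact intervalIntegral.integral_congr fun u _ => part1 u
  refine ⟨part1, fun s => by rw [hsNfun], fun s => ?_⟩
  rw [hsNfun]
  exact intervalIntegral.integral_hasDerivAt_right
    (hτcont.intervalIntegrable 0 s)
    (hτcont.stronglyMeasurable.stronglyMeasurableAtFilter)
    hτcont.continuousAt
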